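/- Let p and q be odd integers with p, q ≥ 5. Then there is a surjective group homomorphism from the presented group on generators a,b,c with relators c^2, a^p, b^q, abc, and b^{(q+1)/2} c b^{(q-1)/2} a^{(p-1)/2} c a^{(p+1)/2}, onto Coxeter's group (2,p,q;2). -/

import Mathlib

/-- The relators of the group `G'_ev(p,q)` on generators `a = of 0`, `b = of 1`, `c = of 2`,
with relators `c², aᵖ, b^q, abc, b^{(q+1)/2} c b^{(q-1)/2} a^{(p-1)/2} c a^{(p+1)/2}`. -/
def GevRels (p q : ℤ) : Set (FreeGroup (Fin 3)) :=
  let a : FreeGroup (Fin 3) := FreeGroup.of 0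
  let b : FreeGroup (Fin 3) := FreeGroup.of 1
  let c : FreeGroup (Fin 3) := FreeGroup.of 2
  { c ^ 2, a ^ p, b ^ q, a * b * c,
    b ^ ((q + 1) / 2) * c * b ^ ((q - 1) / 2) * a ^ ((p - 1) / 2) * c * a ^ ((p + 1) / 2) }

/-- The relators of Coxeter's group `(2,p,q;2)` on generators `α = of 0`, `β = of 1`,
with relators `αᵖ, β^q, (αβ)², (α²β²)²`. -/
def coxeter2pq2Rels (p q : ℤ) : Set (FreeGroup (Fin 2)) :=
  let al : FreeGroup (Fin 2) := FreeGroup.of 0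
  let be : FreeGroup (Fin 2) := FreeGroup.of 1
  { al ^ p, be ^ q, (al * be) ^ 2, (al ^ 2 * be ^ 2) ^ 2 }

/-- For `p,q` odd with `p,q ≥ 5`, the group
`⟨a,b,c ∣ c², aᵖ, b^q, abc, b^{(q+1)/2} c b^{(q-1)/2} a^{(p-1)/2} c a^{(p+1)/2}⟩`
surjects onto Coxeter's group `(2,p,q;2)`. -/
theorem Gev_surjects_onto_coxeter (p q : ℤ) (hp : Odd p) (hq : Odd q)
    (hp5 : 5 ≤ p) (hq5 : 5 ≤ q) :
    ∃ f : PresentedGroup (GevRels p q) →* PresentedGroup (coxeter2pq2Rels p q),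
      Function.Surjective f := by
  obtain ⟨k, hk⟩ := hp
  obtain ⟨l, hl⟩ := hq
  set G := PresentedGroup (coxeter2pq2Rels p q) with hG
  set A : G := PresentedGroup.of 0 with hA
  set B : G := PresentedGroup.of 1 with hB
  have key : ∀ r ∈ coxeter2pq2Rels p q, (PresentedGroup.mk (coxeter2pq2Rels p q) r) = 1 := by
    intro r hr
    exact (QuotientGroup.eq_one_iff r).mpr (Subgroup.subset_normalClosure hr)
  have hmk : ∀ w : FreeGroup (Fin 2), PresentedGroup.mk (coxeter2pq2Rels p q) w
      = (QuotientGroup.mk' (Subgroup.normalClosure (coxeter2pq2Rels p q))) w := fun _ => rfl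
  have hAp : A ^ p = 1 := by
    rw [hA]
    have := key (FreeGroup.of 0 ^ p) (by simp [coxeter2pq2Rels])
    rw [hmk] at this
    simpa [PresentedGroup.of, ← hmk, map_zpow] using this
  have hBq : B ^ q = 1 := by
    rw [hB]
    have := key (FreeGroup.of 1 ^ q) (by simp [coxeter2pq2Rels])
    rw [hmk] at this
    simpa [PresentedGroup.of, ← hmk, map_zpow] using this
  have hABsq : (A * B) ^ 2 = 1 := by
    have := key ((FreeGroup.of 0 * FreeGroup.of 1) ^ 2) (by simp [coxeter2pq2Rels])
    rw [hmk] at this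
    simpa [PresentedGroup.of, hA, hB, ← hmk] using this
  have hAABB : (A ^ 2 * B ^ 2) ^ 2 = 1 := by
    have := key ((FreeGroup.of 0 ^ 2 * FreeGroup.of 1 ^ 2) ^ 2) (by simp [coxeter2pq2Rels])
    rw [hmk] at this
    simpa [PresentedGroup.of, hA, hB, ← hmk] using this
  -- powers of A and B
  have hA2 : ∀ n : ℤ, (A ^ (2:ℕ)) ^ n = A ^ (2 * n) := by
    intro n; rw [← zpow_natCast A 2, ← zpow_mul]; norm_num
  have hB2 : ∀ n : ℤ, (B ^ (2:ℕ)) ^ n = B ^ (2 * n) := by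
    intro n; rw [← zpow_natCast B 2, ← zpow_mul]; norm_num
  -- the map on generators
  set φ : Fin 3 → G := ![A ^ 2, B ^ 2, (A ^ 2 * B ^ 2)⁻¹] with hφ
  have hrels : ∀ r ∈ GevRels p q, FreeGroup.lift φ r = 1 := by
    intro r hr
    simp only [GevRels, Set.mem_insert_iff, Set.mem_singleton_iff] at hr
    rcases hr with rfl | rfl | rfl | rfl | rfl
    · simp only [map_pow, FreeGroup.lift_apply_of, hφ]
      simp only [Matrix.cons_val_two, Matrix.tail_cons, Matrix.head_cons]
      rw [inv_pow, hAABB, inv_one]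
    · simp only [map_zpow, FreeGroup.lift_apply_of, hφ]
      simp only [Matrix.cons_val_zero]
      rw [hA2, mul_comm, zpow_mul, hAp, one_zpow]
    · simp only [map_zpow, FreeGroup.lift_apply_of, hφ]
      simp only [Matrix.cons_val_one, Matrix.head_cons, Matrix.cons_val_zero]
      rw [hB2, mul_comm, zpow_mul, hBq, one_zpow]
    · simp only [map_mul, FreeGroup.lift_apply_of, hφ]
      simp only [Matrix.cons_val_zero, Matrix.cons_val_one, Matrix.head_cons,
        Matrix.cons_val_two, Matrix.tail_cons]
      group
    · simp only [map_mul, map_zpow, FreeGroup.lift_apply_of, hφ]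
      simp only [Matrix.cons_val_zero, Matrix.cons_val_one, Matrix.head_cons,
        Matrix.cons_val_two, Matrix.tail_cons]
      rw [hA2, hA2, hB2, hB2]
      have e1 : 2 * ((q + 1) / 2) = q + 1 := by omega
      have e2 : 2 * ((q - 1) / 2) = q - 1 := by omega
      have e3 : 2 * ((p - 1) / 2) = p - 1 := by omega
      have e4 : 2 * ((p + 1) / 2) = p + 1 := by omega
      rw [e1, e2, e3, e4]
      have f1 : B ^ (q + 1) = B := by rw [zpow_add, hBq, one_mul, zpow_one]
      have f2 : B ^ (q - 1) = B⁻¹ := by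
        rw [zpow_sub, hBq, zpow_one]; group
      have f3 : A ^ (p - 1) = A⁻¹ := by
        rw [zpow_sub, hAp, zpow_one]; group
      have f4 : A ^ (p + 1) = A := by rw [zpow_add, hAp, one_mul, zpow_one]
      rw [f1, f2, f3, f4]
      have hABsq' : A * B * (A * B) = 1 := by rw [← sq]; exact hABsq
      have crux : B * (A ^ 2 * B ^ 2)⁻¹ * B⁻¹ * A⁻¹ * (A ^ 2 * B ^ 2)⁻¹ * A
          = ((A * B) * (A⁻¹ * (A * B * (A * B)) * A) * (A * B))⁻¹ := by group
      rw [crux, hABsq']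
      have : (A * B) * (A⁻¹ * 1 * A) * (A * B) = A * B * (A * B) := by group
      rw [this, hABsq', inv_one]
  refine ⟨PresentedGroup.toGroup hrels, ?_⟩
  rw [← MonoidHom.range_eq_top]
  rw [eq_top_iff]
  intro x _
  refine PresentedGroup.generated_by _ _ ?_ x
  intro j
  have h0 : (PresentedGroup.toGroup hrels) (PresentedGroup.of 0) = A ^ 2 := by
    rw [PresentedGroup.toGroup.of]; rfl
  have h1 : (PresentedGroup.toGroup hrels) (PresentedGroup.of 1) = B ^ 2 := by
    rw [PresentedGroup.toGroup.of]; rfl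
  fin_cases j
  · refine ⟨(PresentedGroup.of 0) ^ (k + 1), ?_⟩
    rw [map_zpow, h0, hA2, show 2 * (k+1) = p + 1 by omega]
    rw [zpow_add, hAp, one_mul, zpow_one]
    rfl
  · refine ⟨(PresentedGroup.of 1) ^ (l + 1), ?_⟩
    rw [map_zpow, h1, hB2, show 2 * (l+1) = q + 1 by omega]
    rw [zpow_add, hBq, one_mul, zpow_one]
    rfl
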